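/- arXiv:1601.01536 — 2 statements merged into one kernel-verified Lean document; each statement's English description precedes it below -/
import Mathlib

section
/- Let (V₀, ω₀), (V₁, ω₁), (V₂, ω₂) be finite-dimensional symplectic vector spaces over a field of characteristic ≠ 2. Let L₁ ⊆ V₀ × V₁ be Lagrangian with respect to (-ω₀) ⊕ ω₁ and L₂ ⊆ V₁ × V₂ be Lagrangian with respect to (-ω₁) ⊕ ω₂. Then the composed relation L₂ ∘ L₁ = {(v₀, v₂) : ∃ v₁ ∈ V₁, (v₀, v₁) ∈ L₁ and (v₁, v₂) ∈ L₂} is a Lagrangian subspace of V₀ × V₂ with respect to (-ω₀) ⊕ ω₂ (no transversality hypothesis is needed). -/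
/-- The symplectic orthogonal `L^ω = {v : ω(v,l) = 0 for all l ∈ L}` of a subspace. -/
def symplOrth {k V : Type*} [Field k] [AddCommGroup V] [Module k V]
    (ω : V →ₗ[k] V →ₗ[k] k) (L : Submodule k V) : Submodule k V where
  carrier := {v | ∀ l ∈ L, ω v l = 0}
  add_mem' := by
    intro a b ha hb l hl
    simp [map_add, ha l hl, hb l hl]
  zero_mem' := by
    intro l hl
    simp
  smul_mem' := by
    intro c a ha l hl
    simp [map_smul, ha l hl]

/-- A subspace is Lagrangian if it equals its symplectic orthogonal. -/
def IsLagrangian {k V : Type*} [Field k] [AddCommGroup V] [Module k V]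
    (ω : V →ₗ[k] V →ₗ[k] k) (L : Submodule k V) : Prop :=
  L = symplOrth ω L

/-- The direct sum form `ω₀ ⊕ ω₁` on `V₀ × V₁`. -/
def prodForm {k V₀ V₁ : Type*} [Field k] [AddCommGroup V₀] [Module k V₀]
    [AddCommGroup V₁] [Module k V₁]
    (ω₀ : V₀ →ₗ[k] V₀ →ₗ[k] k) (ω₁ : V₁ →ₗ[k] V₁ →ₗ[k] k) :
    (V₀ × V₁) →ₗ[k] (V₀ × V₁) →ₗ[k] k :=
  LinearMap.mk₂ k (fun u v => ω₀ u.1 v.1 + ω₁ u.2 v.2)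
    (fun u u' v => by simp [map_add]; ring)
    (fun c u v => by simp [map_smul]; ring)
    (fun u v v' => by simp [map_add]; ring)
    (fun c u v => by simp [map_smul]; ring)

/-- The composition of two linear relations `L₁ ⊆ V₀ × V₁`, `L₂ ⊆ V₁ × V₂`. -/
def lagComposeRel {k V₀ V₁ V₂ : Type*} [Field k]
    [AddCommGroup V₀] [Module k V₀] [AddCommGroup V₁] [Module k V₁]
    [AddCommGroup V₂] [Module k V₂]
    (L₁ : Submodule k (V₀ × V₁)) (L₂ : Submodule k (V₁ × V₂)) :
    Submodule k (V₀ × V₂) where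
  carrier := {p | ∃ v₁ : V₁, (p.1, v₁) ∈ L₁ ∧ (v₁, p.2) ∈ L₂}
  add_mem' := by
    rintro p q ⟨a, ha₁, ha₂⟩ ⟨b, hb₁, hb₂⟩
    exact ⟨a + b, L₁.add_mem ha₁ hb₁, L₂.add_mem ha₂ hb₂⟩
  zero_mem' := ⟨0, L₁.zero_mem, L₂.zero_mem⟩
  smul_mem' := by
    rintro c p ⟨a, ha₁, ha₂⟩
    exact ⟨c • a, L₁.smul_mem c ha₁, L₂.smul_mem c ha₂⟩

set_option maxHeartbeats 1000000
set_option synthInstance.maxHeartbeats 400000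

open Module

lemma mem_symplOrth {k V : Type*} [Field k] [AddCommGroup V] [Module k V]
    (ω : V →ₗ[k] V →ₗ[k] k) (L : Submodule k V) (v : V) :
    v ∈ symplOrth ω L ↔ ∀ l ∈ L, ω v l = 0 := Iff.rfl

lemma mem_lagComposeRel {k V₀ V₁ V₂ : Type*} [Field k]
    [AddCommGroup V₀] [Module k V₀] [AddCommGroup V₁] [Module k V₁]
    [AddCommGroup V₂] [Module k V₂]
    (L₁ : Submodule k (V₀ × V₁)) (L₂ : Submodule k (V₁ × V₂)) (p : V₀ × V₂) :
    p ∈ lagComposeRel L₁ L₂ ↔ ∃ v₁ : V₁, (p.1, v₁) ∈ L₁ ∧ (v₁, p.2) ∈ L₂ := Iff.rfl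

lemma prodForm_apply {k V₀ V₁ : Type*} [Field k] [AddCommGroup V₀] [Module k V₀]
    [AddCommGroup V₁] [Module k V₁]
    (ω₀ : V₀ →ₗ[k] V₀ →ₗ[k] k) (ω₁ : V₁ →ₗ[k] V₁ →ₗ[k] k) (u v : V₀ × V₁) :
    prodForm ω₀ ω₁ u v = ω₀ u.1 v.1 + ω₁ u.2 v.2 := rfl

/-- finrank of the symplectic orthogonal complements the finrank of the subspace. -/
lemma finrank_symplOrth {k V : Type*} [Field k] [AddCommGroup V] [Module k V]
    [FiniteDimensional k V]
    (ω : V →ₗ[k] V →ₗ[k] k) (hnd : ∀ v, (∀ w, ω v w = 0) → v = 0) (L : Submodule k V) :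
    finrank k L + finrank k (symplOrth ω L) = finrank k V := by
  have hnd' : LinearMap.BilinForm.Nondegenerate ω :=
    LinearMap.BilinForm.Nondegenerate.ofSeparatingLeft hnd
  let e := LinearMap.BilinForm.toDual ω hnd'
  have h1 : symplOrth ω L = Submodule.comap (e : V →ₗ[k] Module.Dual k V) L.dualAnnihilator := by
    ext v
    simp only [mem_symplOrth, Submodule.mem_comap, Submodule.mem_dualAnnihilator]
    rfl
  have h2 : finrank k (symplOrth ω L) = finrank k L.dualAnnihilator := by
    rw [h1, Submodule.comap_equiv_eq_map_symm]
    exact LinearEquiv.finrank_map_eq e.symm L.dualAnnihilator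
  have h3 : finrank k L.dualAnnihilator = finrank k (V ⧸ L) :=
    ((Subspace.quotEquivAnnihilator L).finrank_eq).symm
  rw [h2, h3, add_comm]
  exact Submodule.finrank_quotient_add_finrank L

lemma prodForm_neg_nondeg {k Va Vb : Type*} [Field k] [AddCommGroup Va] [Module k Va]
    [AddCommGroup Vb] [Module k Vb]
    (ωa : Va →ₗ[k] Va →ₗ[k] k) (ωb : Vb →ₗ[k] Vb →ₗ[k] k)
    (ha : ∀ v, (∀ w, ωa v w = 0) → v = 0) (hb : ∀ v, (∀ w, ωb v w = 0) → v = 0) :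
    ∀ v : Va × Vb, (∀ w, prodForm (-ωa) ωb v w = 0) → v = 0 := by
  intro v hv
  have h1 : v.1 = 0 := ha v.1 fun w => by
    have h := hv (w, 0)
    simp only [prodForm_apply, LinearMap.neg_apply, map_zero, add_zero, neg_eq_zero] at h
    exact h
  have h2 : v.2 = 0 := hb v.2 fun w => by
    have h := hv (0, w)
    simp only [prodForm_apply, LinearMap.neg_apply, map_zero, LinearMap.zero_apply,
      neg_zero, zero_add] at h
    exact h
  exact Prod.ext h1 h2

/-- Composition of Lagrangian correspondences is Lagrangian, with no
transversality hypothesis. -/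
theorem compRel_isLagrangian {k V₀ V₁ V₂ : Type*} [Field k]
    [AddCommGroup V₀] [Module k V₀] [FiniteDimensional k V₀]
    [AddCommGroup V₁] [Module k V₁] [FiniteDimensional k V₁]
    [AddCommGroup V₂] [Module k V₂] [FiniteDimensional k V₂]
    (h2 : (2 : k) ≠ 0)
    (ω₀ : V₀ →ₗ[k] V₀ →ₗ[k] k) (ω₁ : V₁ →ₗ[k] V₁ →ₗ[k] k) (ω₂ : V₂ →ₗ[k] V₂ →ₗ[k] k)
    (halt₀ : ∀ v, ω₀ v v = 0) (hnondeg₀ : ∀ v, (∀ w, ω₀ v w = 0) → v = 0)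
    (halt₁ : ∀ v, ω₁ v v = 0) (hnondeg₁ : ∀ v, (∀ w, ω₁ v w = 0) → v = 0)
    (halt₂ : ∀ v, ω₂ v v = 0) (hnondeg₂ : ∀ v, (∀ w, ω₂ v w = 0) → v = 0)
    (L₁ : Submodule k (V₀ × V₁)) (L₂ : Submodule k (V₁ × V₂))
    (hL₁ : IsLagrangian (prodForm (-ω₀) ω₁) L₁)
    (hL₂ : IsLagrangian (prodForm (-ω₁) ω₂) L₂) :
    IsLagrangian (prodForm (-ω₀) ω₂) (lagComposeRel L₁ L₂) := by
  classical
  rw [IsLagrangian] at hL₁ hL₂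
  set Ω := prodForm (-ω₀) ω₂ with hΩdef
  set L := lagComposeRel L₁ L₂ with hLdef
  -- Isotropy: L ≤ L^Ω
  have hiso : L ≤ symplOrth Ω L := by
    rintro p ⟨v, hv1, hv2⟩ q ⟨w, hw1, hw2⟩
    rw [hL₁] at hv1
    rw [hL₂] at hv2
    have e1 := hv1 (q.1, w) hw1
    have e2 := hv2 (w, q.2) hw2
    simp only [hΩdef, prodForm_apply, LinearMap.neg_apply] at e1 e2 ⊢
    linear_combination e1 + e2
  -- the fibre-product maps, obtained as opaque linear maps
  obtain ⟨φ, φ_apply⟩ : ∃ φ : (↥L₁ × ↥L₂) →ₗ[k] V₁,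
      ∀ x : ↥L₁ × ↥L₂, φ x = (x.1 : V₀ × V₁).2 - (x.2 : V₁ × V₂).1 :=
    ⟨((LinearMap.snd k V₀ V₁).comp L₁.subtype).comp (LinearMap.fst k ↥L₁ ↥L₂) -
      ((LinearMap.fst k V₁ V₂).comp L₂.subtype).comp (LinearMap.snd k ↥L₁ ↥L₂),
      fun x => rfl⟩
  letI iX1 : FiniteDimensional k ↥L₁ := inferInstance
  letI iX2 : FiniteDimensional k ↥L₂ := inferInstance
  letI iXa : AddCommGroup (↥L₁ × ↥L₂) := inferInstance
  letI iXm : Module k (↥L₁ × ↥L₂) := inferInstance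
  letI iX : FiniteDimensional k (↥L₁ × ↥L₂) := inferInstance
  letI iK1 : AddCommGroup ↥(LinearMap.ker φ) := Submodule.addCommGroup _
  letI iK2 : Module k ↥(LinearMap.ker φ) := Submodule.module _
  letI iK3 : FiniteDimensional k ↥(LinearMap.ker φ) :=
    FiniteDimensional.finiteDimensional_submodule _
  obtain ⟨g, g_apply⟩ : ∃ g : ↥(LinearMap.ker φ) →ₗ[k] V₀ × V₂,
      ∀ x : ↥(LinearMap.ker φ),
        g x = ((x.val.1 : V₀ × V₁).1, (x.val.2 : V₁ × V₂).2) :=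
    ⟨(((LinearMap.fst k V₀ V₁).comp (L₁.subtype.comp (LinearMap.fst k ↥L₁ ↥L₂))).prod
        ((LinearMap.snd k V₁ V₂).comp (L₂.subtype.comp (LinearMap.snd k ↥L₁ ↥L₂)))).comp
      (LinearMap.ker φ).subtype, fun x => rfl⟩
  letI iG1 : AddCommGroup ↥(LinearMap.ker g) := Submodule.addCommGroup _
  letI iG2 : Module k ↥(LinearMap.ker g) := Submodule.module _
  letI iG3 : FiniteDimensional k ↥(LinearMap.ker g) :=
    FiniteDimensional.finiteDimensional_submodule _
  -- range g = L
  have hrg : LinearMap.range g = L := by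
    ext p
    constructor
    · rintro ⟨⟨⟨⟨a, ha⟩, ⟨b, hb⟩⟩, hker⟩, rfl⟩
      rw [LinearMap.mem_ker, φ_apply] at hker
      have hab : a.2 = b.1 := by
        simpa [sub_eq_zero] using hker
      refine ⟨a.2, ?_, ?_⟩
      · simpa [g_apply] using ha
      · rw [g_apply]
        simpa [hab] using hb
    · rintro ⟨v, h1, h2⟩
      refine ⟨⟨(⟨(p.1, v), h1⟩, ⟨(v, p.2), h2⟩), ?_⟩, ?_⟩
      · rw [LinearMap.mem_ker, φ_apply]
        simp
      · rw [g_apply]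
  -- ker g is isomorphic to F := (range φ)^{ω₁}
  set F := symplOrth ω₁ (LinearMap.range φ) with hFdef
  obtain ⟨ψ, ψ_apply⟩ : ∃ ψ : ↥(LinearMap.ker g) →ₗ[k] V₁,
      ∀ x : ↥(LinearMap.ker g), ψ x = (x.val.val.1 : V₀ × V₁).2 :=
    ⟨(((LinearMap.snd k V₀ V₁).comp L₁.subtype).comp
        ((LinearMap.fst k ↥L₁ ↥L₂).comp (LinearMap.ker φ).subtype)).comp
      (LinearMap.ker g).subtype, fun x => rfl⟩
  have hker0 : ∀ x : ↥(LinearMap.ker g), ψ x = 0 → x = 0 := by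
    rintro ⟨⟨⟨⟨a, ha⟩, ⟨b, hb⟩⟩, hker⟩, hg⟩ hψ0
    rw [ψ_apply] at hψ0
    rw [LinearMap.mem_ker, φ_apply] at hker
    rw [LinearMap.mem_ker, g_apply] at hg
    have ha1 : a.1 = 0 := congrArg Prod.fst hg
    have hb2 : b.2 = 0 := congrArg Prod.snd hg
    have ha2 : a.2 = 0 := hψ0
    have hb1 : b.1 = 0 := by
      have h : a.2 - b.1 = 0 := hker
      rw [ha2] at h
      simpa [eq_comm] using h
    simp only [Submodule.mk_eq_zero, Prod.mk_eq_zero]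
    exact ⟨Prod.ext ha1 ha2, Prod.ext hb1 hb2⟩
  have hψinj : Function.Injective ψ := by
    intro x y hxy
    have h0 : ψ (x - y) = 0 := by rw [map_sub, hxy, sub_self]
    have h1 := hker0 _ h0
    exact sub_eq_zero.mp h1
  have hψrange : LinearMap.range ψ = F := by
    ext v
    constructor
    · rintro ⟨⟨⟨⟨⟨a, ha⟩, ⟨b, hb⟩⟩, hker⟩, hg⟩, rfl⟩
      rw [LinearMap.mem_ker, φ_apply] at hker
      rw [LinearMap.mem_ker, g_apply] at hg
      have ha1 : a.1 = 0 := congrArg Prod.fst hg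
      have hb2 : b.2 = 0 := congrArg Prod.snd hg
      have hab : a.2 = b.1 := by simpa [sub_eq_zero] using hker
      rw [ψ_apply]
      intro l hl
      obtain ⟨⟨⟨c, hc⟩, ⟨d, hd⟩⟩, rfl⟩ := hl
      rw [φ_apply]
      rw [hL₁] at ha
      rw [hL₂] at hb
      have e1 := ha c hc
      have e2 := hb d hd
      have e1' : ω₁ a.2 c.2 = 0 := by
        simp only [prodForm_apply, LinearMap.neg_apply, ha1, map_zero,
          LinearMap.zero_apply, neg_zero, zero_add, neg_eq_zero] at e1
        exact e1
      have e2' : ω₁ b.1 d.1 = 0 := by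
        simp only [prodForm_apply, LinearMap.neg_apply, hb2, map_zero,
          LinearMap.zero_apply, add_zero, neg_eq_zero] at e2
        exact e2
      rw [map_sub, e1', hab, e2']
      simp
    · intro hv
      have h1 : ((0 : V₀), v) ∈ L₁ := by
        rw [hL₁]
        intro l hl
        have hl2 : ω₁ v l.2 = 0 := by
          refine hv l.2 ⟨(⟨l, hl⟩, 0), ?_⟩
          rw [φ_apply]; simp
        simp [prodForm_apply, hl2]
      have h2 : (v, (0 : V₂)) ∈ L₂ := by
        rw [hL₂]
        intro l hl
        have hl1 : ω₁ v l.1 = 0 := by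
          have h := hv (-l.1) ⟨(0, ⟨l, hl⟩), by rw [φ_apply]; simp⟩
          simpa [neg_eq_zero] using h
        simp [prodForm_apply, hl1]
      refine ⟨⟨⟨(⟨(0, v), h1⟩, ⟨(v, 0), h2⟩), ?_⟩, ?_⟩, ψ_apply _⟩
      · rw [LinearMap.mem_ker, φ_apply]; simp
      · rw [LinearMap.mem_ker, g_apply]; simp
  -- dimension bookkeeping
  have d1 : finrank k ↥(LinearMap.range g) + finrank k ↥(LinearMap.ker g)
      = finrank k ↥(LinearMap.ker φ) := LinearMap.finrank_range_add_finrank_ker g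
  have d2 : finrank k ↥(LinearMap.range φ) + finrank k ↥(LinearMap.ker φ)
      = finrank k ↥L₁ + finrank k ↥L₂ := by
    rw [LinearMap.finrank_range_add_finrank_ker φ]
    exact Module.finrank_prod
  have d3 : finrank k ↥(LinearMap.ker g) = finrank k ↥F := by
    rw [← hψrange]
    exact (LinearEquiv.ofInjective ψ hψinj).finrank_eq
  have d4 : finrank k ↥(LinearMap.range φ) + finrank k ↥F = finrank k V₁ := by
    rw [hFdef]
    exact finrank_symplOrth ω₁ hnondeg₁ _
  have hnd01 := prodForm_neg_nondeg ω₀ ω₁ hnondeg₀ hnondeg₁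
  have hnd12 := prodForm_neg_nondeg ω₁ ω₂ hnondeg₁ hnondeg₂
  have hnd02 := prodForm_neg_nondeg ω₀ ω₂ hnondeg₀ hnondeg₂
  have d5 : finrank k ↥L₁ + finrank k ↥L₁ = finrank k V₀ + finrank k V₁ := by
    have h := finrank_symplOrth (prodForm (-ω₀) ω₁) hnd01 L₁
    rw [← hL₁] at h
    rw [h]
    exact Module.finrank_prod
  have d6 : finrank k ↥L₂ + finrank k ↥L₂ = finrank k V₁ + finrank k V₂ := by
    have h := finrank_symplOrth (prodForm (-ω₁) ω₂) hnd12 L₂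
    rw [← hL₂] at h
    rw [h]
    exact Module.finrank_prod
  have d7 : finrank k ↥L + finrank k ↥(symplOrth Ω L) = finrank k V₀ + finrank k V₂ := by
    have h := finrank_symplOrth Ω hnd02 L
    rw [h]
    exact Module.finrank_prod
  have d8 : finrank k ↥(LinearMap.range g) = finrank k ↥L := by rw [hrg]
  have key : finrank k ↥(symplOrth Ω L) ≤ finrank k ↥L := by omega
  exact Submodule.eq_of_le_of_finrank_le hiso key
end

section
/- Let (V₀, ω₀) and (V₁, ω₁) be finite-dimensional symplectic vector spaces over a field of characteristic ≠ 2, let L ⊆ V₀ × V₁ be a Lagrangian subspace with respect to (-ω₀) ⊕ ω₁, and let N ⊆ V₀ be a Lagrangian subspace of (V₀, ω₀). Then L(N) = {v₁ ∈ V₁ : ∃ v₀ ∈ N, (v₀, v₁) ∈ L} is a Lagrangian subspace of (V₁, ω₁). -/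
def pushRel {k V₀ V₁ : Type*} [Field k]
    [AddCommGroup V₀] [Module k V₀] [AddCommGroup V₁] [Module k V₁]
    (L : Submodule k (V₀ × V₁)) (N : Submodule k V₀) : Submodule k V₁ where
  carrier := {v₁ | ∃ v₀ ∈ N, (v₀, v₁) ∈ L}
  add_mem' := by
    rintro a b ⟨x, hx, hxa⟩ ⟨y, hy, hyb⟩
    exact ⟨x + y, N.add_mem hx hy, L.add_mem hxa hyb⟩
  zero_mem' := ⟨0, N.zero_mem, L.zero_mem⟩
  smul_mem' := by
    rintro c a ⟨x, hx, hxa⟩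
    exact ⟨c • x, N.smul_mem c hx, L.smul_mem c hxa⟩

section Aux

variable {k V : Type*} [Field k] [AddCommGroup V] [Module k V]

/-- alternating implies skew-symmetric / reflexive -/
lemma refl_of_alt (ω : V →ₗ[k] V →ₗ[k] k) (halt : ∀ v, ω v v = 0) :
    LinearMap.IsRefl ω := by
  intro x y h
  have := halt (x + y)
  simp [map_add, halt x, halt y] at this
  linear_combination this - h

lemma symplOrth_eq_orthogonal (ω : V →ₗ[k] V →ₗ[k] k) (halt : ∀ v, ω v v = 0)
    (L : Submodule k V) : symplOrth ω L = LinearMap.BilinForm.orthogonal ω L := by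
  ext v
  constructor
  · intro hv l hl
    exact refl_of_alt ω halt v l (hv l hl)
  · intro hv l hl
    exact refl_of_alt ω halt l v (hv l hl)

lemma symplOrth_symplOrth [FiniteDimensional k V] (ω : V →ₗ[k] V →ₗ[k] k)
    (halt : ∀ v, ω v v = 0) (hnd : ∀ v, (∀ w, ω v w = 0) → v = 0)
    (L : Submodule k V) : symplOrth ω (symplOrth ω L) = L := by
  rw [symplOrth_eq_orthogonal ω halt, symplOrth_eq_orthogonal ω halt]
  exact LinearMap.BilinForm.orthogonal_orthogonal ((refl_of_alt ω halt).nondegenerate_iff_separatingLeft.mpr hnd) (refl_of_alt ω halt) L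

end Aux

/-- A Lagrangian correspondence maps Lagrangians to Lagrangians. -/
theorem pushRel_isLagrangian {k V₀ V₁ : Type*} [Field k]
    [AddCommGroup V₀] [Module k V₀] [FiniteDimensional k V₀]
    [AddCommGroup V₁] [Module k V₁] [FiniteDimensional k V₁]
    (h2 : (2 : k) ≠ 0)
    (ω₀ : V₀ →ₗ[k] V₀ →ₗ[k] k) (ω₁ : V₁ →ₗ[k] V₁ →ₗ[k] k)
    (halt₀ : ∀ v, ω₀ v v = 0) (hnondeg₀ : ∀ v, (∀ w, ω₀ v w = 0) → v = 0)
    (halt₁ : ∀ v, ω₁ v v = 0) (hnondeg₁ : ∀ v, (∀ w, ω₁ v w = 0) → v = 0)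
    (L : Submodule k (V₀ × V₁)) (hL : IsLagrangian (prodForm (-ω₀) ω₁) L)
    (N : Submodule k V₀) (hN : IsLagrangian ω₀ N) :
    IsLagrangian ω₁ (pushRel L N) := by
  set Ω := prodForm (-ω₀) ω₁ with hΩ
  have hΩapp : ∀ u v : V₀ × V₁, Ω u v = -(ω₀ u.1 v.1) + ω₁ u.2 v.2 := by
    intro u v; rfl
  have haltΩ : ∀ v, Ω v v = 0 := by
    intro v; rw [hΩapp, halt₀, halt₁]; ring
  have hndΩ : ∀ v, (∀ w, Ω v w = 0) → v = 0 := by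
    intro v hv
    have h1 : v.1 = 0 := by
      apply hnondeg₀ v.1; intro w
      have := hv (w, 0)
      rw [hΩapp] at this
      simp at this
      exact this
    have h2 : v.2 = 0 := by
      apply hnondeg₁ v.2; intro w
      have := hv (0, w)
      rw [hΩapp] at this
      simp at this
      exact this
    exact Prod.ext h1 h2
  -- key: L ⊔ N×0 = orth of (L ⊓ N×⊤)
  have key : L ⊔ N.prod ⊥ = symplOrth Ω (L ⊓ N.prod ⊤) := by
    have h1 : symplOrth Ω (L ⊔ N.prod ⊥) = L ⊓ N.prod ⊤ := by
      ext v
      simp only [Submodule.mem_inf]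
      constructor
      · intro hv
        constructor
        · rw [hL]
          intro l hl
          exact hv l (Submodule.mem_sup_left hl)
        · refine ⟨?_, trivial⟩
          rw [hN]
          intro n hn
          have := hv (n, 0) (Submodule.mem_sup_right (by simp [Submodule.mem_prod, hn]))
          rw [hΩapp] at this
          simp at this
          exact this
      · rintro ⟨hvL, hvN, -⟩ l hl
        rw [Submodule.mem_sup] at hl
        obtain ⟨a, ha, b, hb, rfl⟩ := hl
        rw [map_add]
        have hva : Ω v a = 0 := by
          rw [hL] at hvL; exact hvL a ha
        have hvb : Ω v b = 0 := by
          rw [Submodule.mem_prod] at hb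
          rw [hΩapp]
          rw [hN] at hvN
          have := hvN b.1 hb.1
          rw [hb.2]
          simp [this]
        rw [hva, hvb]
        exact add_zero 0
    conv_lhs => rw [← symplOrth_symplOrth Ω haltΩ hndΩ (L ⊔ N.prod ⊥)]
    rw [h1]
  apply le_antisymm
  · -- isotropic
    rintro v₁ ⟨v₀, hv₀, hvL⟩ l₁ ⟨l₀, hl₀, hlL⟩
    have hL' : Ω (v₀, v₁) (l₀, l₁) = 0 := by
      rw [hL] at hvL; exact hvL _ hlL
    rw [hΩapp] at hL'
    have hN' : ω₀ v₀ l₀ = 0 := by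
      rw [hN] at hv₀; exact hv₀ _ hl₀
    simp only at hL'
    rw [hN'] at hL'
    simpa using hL'
  · -- coisotropic
    intro w₁ hw₁
    have hmem : ((0 : V₀), w₁) ∈ L ⊔ N.prod ⊥ := by
      rw [key]
      rintro ⟨v₀, v₁⟩ hv
      rw [Submodule.mem_inf, Submodule.mem_prod] at hv
      obtain ⟨hvL, hvN, -⟩ := hv
      rw [hΩapp]
      simp only [map_zero, LinearMap.zero_apply, neg_zero, zero_add]
      exact hw₁ v₁ ⟨v₀, hvN, hvL⟩
    rw [Submodule.mem_sup] at hmem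
    obtain ⟨a, ha, b, hb, hab⟩ := hmem
    rw [Submodule.mem_prod] at hb
    have h1 : a.1 = -b.1 := by
      have := congrArg Prod.fst hab
      simp at this
      exact eq_neg_of_add_eq_zero_left this
    have hb2 : b.2 = 0 := hb.2
    have h2 : a.2 = w₁ := by
      have := congrArg Prod.snd hab
      simpa [hb2] using this
    refine ⟨a.1, ?_, by rwa [← h2]⟩
    rw [h1]
    exact N.neg_mem hb.1
end
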